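/- Let Y be a Banach space, A a proper closed subset with k ∈ -0⁺A \ {0}. Then φ_{A,k} is finite-valued and Lipschitz if and only if k ∈ -int 0⁺A, and in that case every Lipschitz constant of the sublinear function φ_{0⁺A,k} is a Lipschitz constant of φ_{A,k}. -/

import Mathlib

open Set Pointwise

noncomputable def phiF {Y : Type*} [AddCommGroup Y] [Module ℝ Y] (A : Set Y) (k : Y) (y : Y) : EReal :=
  sInf ((fun t : ℝ => (t : EReal)) '' {t : ℝ | y - t • k ∈ A})

def recCone {Y : Type*} [AddCommGroup Y] [Module ℝ Y] (A : Set Y) : Set Y :=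
  {u | ∀ a ∈ A, ∀ t : ℝ, 0 ≤ t → a + t • u ∈ A}

def algInterior {Y : Type*} [AddCommGroup Y] [Module ℝ Y] (C : Set Y) : Set Y :=
  {x ∈ C | ∀ y : Y, ∃ ε : ℝ, 0 < ε ∧ ∀ t : ℝ, 0 ≤ t → t ≤ ε → x + t • y ∈ C}

section aux
variable {Y : Type*} [NormedAddCommGroup Y] [NormedSpace ℝ Y]

lemma phiF_le_of_mem {A : Set Y} {k y : Y} {t : ℝ} (h : y - t • k ∈ A) :
    phiF A k y ≤ (t : EReal) := sInf_le ⟨t, h, rfl⟩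

lemma exists_lt_of_phiF_lt {A : Set Y} {k y : Y} {c : ℝ} (h : phiF A k y < (c : EReal)) :
    ∃ t : ℝ, t < c ∧ y - t • k ∈ A := by
  obtain ⟨x, hx, hxc⟩ := sInf_lt_iff.mp h
  obtain ⟨t, ht, rfl⟩ := hx
  exact ⟨t, EReal.coe_lt_coe_iff.mp hxc, ht⟩

lemma mem_of_phiF_neg {A : Set Y} {k y : Y}
    (hrec : ∀ a ∈ A, ∀ t : ℝ, 0 ≤ t → a - t • k ∈ A)
    (h : phiF A k y < ((0 : ℝ) : EReal)) : y ∈ A := by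
  obtain ⟨t, ht, hmem⟩ := exists_lt_of_phiF_lt h
  have h2 := hrec _ hmem (-t) (by linarith)
  have heq : (y - t • k) - (-t) • k = y := by module
  rwa [heq] at h2

lemma le_coe_of_forall_eps {x : EReal} {c : ℝ}
    (h : ∀ ε : ℝ, 0 < ε → x ≤ ((c + ε : ℝ) : EReal)) : x ≤ (c : EReal) := by
  induction x using EReal.rec with
  | bot => exact bot_le
  | coe r =>
    have h' : ∀ ε : ℝ, 0 < ε → r ≤ c + ε := fun ε hε => by exact_mod_cast h ε hε
    exact_mod_cast le_of_forall_pos_le_add h'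
  | top => exact absurd (h 1 one_pos) (not_le.mpr (EReal.coe_lt_top (c+1)))

lemma recCone_zero (A : Set Y) : (0 : Y) ∈ recCone A := fun a ha t _ => by simpa using ha

lemma recCone_add {A : Set Y} {u v : Y} (hu : u ∈ recCone A) (hv : v ∈ recCone A) :
    u + v ∈ recCone A := fun a ha t ht => by
  have h2 := hv _ (hu a ha t ht) t ht
  have heq : a + t • u + t • v = a + t • (u + v) := by module
  rwa [heq] at h2

lemma recCone_smul {A : Set Y} {u : Y} {s : ℝ} (hs : 0 ≤ s) (hu : u ∈ recCone A) :
    s • u ∈ recCone A := fun a ha t ht => by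
  have h2 := hu a ha (t * s) (mul_nonneg ht hs)
  have heq : a + (t * s) • u = a + t • (s • u) := by module
  rwa [heq] at h2

lemma add_mem_of_recCone {A : Set Y} {a u : Y} (ha : a ∈ A) (hu : u ∈ recCone A) :
    a + u ∈ A := by simpa using hu a ha 1 zero_le_one

lemma recCone_closed {A : Set Y} (hA : IsClosed A) : IsClosed (recCone A) := by
  have heq : recCone A = ⋂ (a ∈ A) (t : ℝ) (_ : 0 ≤ t), (fun u : Y => a + t • u) ⁻¹' A := by
    ext u; simp [recCone]
  rw [heq]
  exact isClosed_iInter fun a => isClosed_iInter fun _ => isClosed_iInter fun t =>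
    isClosed_iInter fun _ => hA.preimage (continuous_const.add (continuous_id.const_smul t))

lemma neg_k_mem {A : Set Y} {k : Y}
    (hrec : ∀ a ∈ A, ∀ t : ℝ, 0 ≤ t → a - t • k ∈ A) : -k ∈ recCone A := fun a ha t ht => by
  have h2 := hrec a ha t ht
  have heq : a - t • k = a + t • (-k) := by module
  rwa [heq] at h2

lemma recCone_sub_k {A : Set Y} {k : Y}
    (hrec : ∀ a ∈ A, ∀ t : ℝ, 0 ≤ t → a - t • k ∈ A) :
    ∀ c ∈ recCone A, ∀ m : ℝ, 0 ≤ m → c - m • k ∈ recCone A := fun c hc m hm => by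
  have h2 := recCone_add hc (recCone_smul hm (neg_k_mem hrec))
  have heq : c + m • (-k) = c - m • k := by module
  rwa [heq] at h2

end aux

section main
variable {Y : Type*} [NormedAddCommGroup Y] [NormedSpace ℝ Y]

lemma ball_subset_recCone {B : Set Y} {k : Y}
    (hB : ∀ b ∈ B, ∀ t : ℝ, 0 ≤ t → b - t • k ∈ B) {L : ℝ} (hL0 : 0 ≤ L)
    (hLip : ∀ y₁ y₂ : Y, phiF B k y₁ ≤ phiF B k y₂ + ((L * ‖y₁ - y₂‖ : ℝ) : EReal)) :
    Metric.ball (-k) (L + 1)⁻¹ ⊆ recCone B := by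
  intro w hw a ha t ht
  rcases ht.eq_or_lt with rfl | ht'
  · simpa using ha
  · have hwk : ‖w + k‖ < (L + 1)⁻¹ := by
      simpa [dist_eq_norm, sub_neg_eq_add] using hw
    have hmem : (a - t • k) - (-t) • k ∈ B := by
      have heq : (a - t • k) - (-t) • k = a := by module
      rwa [heq]
    have h2 : phiF B k (a - t • k) ≤ ((-t : ℝ) : EReal) := phiF_le_of_mem hmem
    have hnorm : ‖(a + t • w) - (a - t • k)‖ = t * ‖w + k‖ := by
      have heq : (a + t • w) - (a - t • k) = t • (w + k) := by module
      rw [heq, norm_smul, Real.norm_eq_abs, abs_of_pos ht']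
    have hL1 : (0:ℝ) < L + 1 := by linarith
    have hcalc : -t + L * (t * ‖w + k‖) < 0 := by
      have h3 : ‖w + k‖ * (L + 1) < 1 := by
        rw [inv_eq_one_div] at hwk
        exact (lt_div_iff₀ hL1).mp hwk
      nlinarith [norm_nonneg (w + k)]
    have hkey : phiF B k (a + t • w) < ((0:ℝ) : EReal) :=
      calc phiF B k (a + t • w)
          ≤ phiF B k (a - t • k) + ((L * ‖(a + t • w) - (a - t • k)‖ : ℝ) : EReal) :=
            hLip _ _
        _ ≤ ((-t : ℝ) : EReal) + ((L * (t * ‖w + k‖) : ℝ) : EReal) := by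
            rw [hnorm]; exact add_le_add h2 le_rfl
        _ = ((-t + L * (t * ‖w + k‖) : ℝ) : EReal) := by rw [← EReal.coe_add]
        _ < ((0:ℝ) : EReal) := EReal.coe_lt_coe_iff.mpr hcalc
    exact mem_of_phiF_neg hB hkey

variable {A : Set Y} {k : Y} {r : ℝ}

lemma mem_recCone_of_big (hr : 0 < r) (hball : Metric.ball (-k) r ⊆ recCone A)
    (u : Y) {ε : ℝ} (hε : 0 < ε) : u - (‖u‖ / r + ε) • k ∈ recCone A := by
  set t : ℝ := ‖u‖ / r + ε with htdef
  have ht : 0 < t := by positivity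
  have h1 : t⁻¹ • u - k ∈ Metric.ball (-k) r := by
    rw [Metric.mem_ball, dist_eq_norm]
    have heq : t⁻¹ • u - k - (-k) = t⁻¹ • u := by module
    rw [heq, norm_smul, Real.norm_eq_abs, abs_of_pos (inv_pos.mpr ht)]
    rw [inv_mul_eq_div, div_lt_iff₀ ht]
    have : r * t = ‖u‖ + r * ε := by
      rw [htdef, mul_add, mul_div_assoc', mul_comm r ‖u‖, mul_div_assoc, div_self hr.ne', mul_one]
    nlinarith
  have h2 := recCone_smul ht.le (hball h1)
  have heq : t • (t⁻¹ • u - k) = u - t • k := by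
    rw [smul_sub, smul_smul, mul_inv_cancel₀ ht.ne', one_smul]
  rwa [heq] at h2

lemma phiC_le_div (hr : 0 < r) (hball : Metric.ball (-k) r ⊆ recCone A) (u : Y) :
    phiF (recCone A) k u ≤ ((‖u‖ / r : ℝ) : EReal) :=
  le_coe_of_forall_eps fun ε hε => phiF_le_of_mem (mem_recCone_of_big hr hball u hε)

lemma k_not_mem_recCone (hAne : A.Nonempty) (hAp : A ≠ Set.univ)
    (hr : 0 < r) (hball : Metric.ball (-k) r ⊆ recCone A) : k ∉ recCone A := by
  intro hk
  apply hAp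
  ext z
  simp only [Set.mem_univ, iff_true]
  obtain ⟨a, ha⟩ := hAne
  have hC : ∀ u : Y, u ∈ recCone A := by
    intro u
    rcases eq_or_ne u 0 with rfl | hu
    · exact recCone_zero A
    · have hu' : (0:ℝ) < ‖u‖ := norm_pos_iff.mpr hu
      have h1 : (r / (2 * ‖u‖)) • u - k ∈ Metric.ball (-k) r := by
        rw [Metric.mem_ball, dist_eq_norm]
        have heq : (r / (2 * ‖u‖)) • u - k - (-k) = (r / (2 * ‖u‖)) • u := by module
        rw [heq, norm_smul, Real.norm_eq_abs, abs_of_pos (by positivity)]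
        rw [div_mul_eq_mul_div, mul_comm]
        rw [div_lt_iff₀ (by positivity)]
        nlinarith
      have h2 : (r / (2 * ‖u‖)) • u ∈ recCone A := by
        have h3 := recCone_add (hball h1) hk
        have heq : (r / (2 * ‖u‖)) • u - k + k = (r / (2 * ‖u‖)) • u := by module
        rwa [heq] at h3
      have h4 := recCone_smul (s := 2 * ‖u‖ / r) (by positivity) h2
      have heq : (2 * ‖u‖ / r) • (r / (2 * ‖u‖)) • u = u := by
        rw [smul_smul]
        have : 2 * ‖u‖ / r * (r / (2 * ‖u‖)) = 1 := by field_simp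
        rw [this, one_smul]
      rwa [heq] at h4
  have h5 := add_mem_of_recCone ha (hC (z - a))
  simpa using h5

lemma phiC_ne_bot (hAc : IsClosed A) (hAne : A.Nonempty) (hAp : A ≠ Set.univ)
    (hr : 0 < r) (hball : Metric.ball (-k) r ⊆ recCone A) (u : Y) :
    phiF (recCone A) k u ≠ ⊥ := by
  intro hbot
  apply k_not_mem_recCone hAne hAp hr hball
  have hclosed : IsClosed (recCone A) := recCone_closed hAc
  rw [← hclosed.closure_eq, Metric.mem_closure_iff]
  intro ε hε
  obtain ⟨t, ht, hmem⟩ : ∃ t : ℝ, t < -(‖u‖ / ε + 1) ∧ u - t • k ∈ recCone A := by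
    refine exists_lt_of_phiF_lt ?_
    rw [hbot]; exact EReal.bot_lt_coe _
  have h0 : (0:ℝ) ≤ ‖u‖ / ε := div_nonneg (norm_nonneg u) hε.le
  have hs : (0:ℝ) < -t := by linarith
  refine ⟨(-t)⁻¹ • (u - t • k), recCone_smul (inv_pos.mpr hs).le hmem, ?_⟩
  have hm1 : (-t)⁻¹ * t = -1 := by
    rw [inv_neg, neg_mul, inv_mul_cancel₀ (by linarith : t ≠ 0)]
  have heq : (-t)⁻¹ • (u - t • k) = (-t)⁻¹ • u + k := by
    rw [smul_sub, smul_smul, hm1, neg_one_smul, sub_neg_eq_add]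
  rw [heq, dist_eq_norm]
  have heq2 : k - ((-t)⁻¹ • u + k) = -((-t)⁻¹ • u) := by abel
  rw [heq2, norm_neg, norm_smul, Real.norm_eq_abs, abs_of_pos (inv_pos.mpr hs),
    inv_mul_eq_div, div_lt_iff₀ hs]
  have hdiv : ε * (‖u‖ / ε) = ‖u‖ := by field_simp
  nlinarith
end main

section main2
variable {Y : Type*} [NormedAddCommGroup Y] [NormedSpace ℝ Y]
variable {A : Set Y} {k : Y} {r : ℝ}

lemma phiC_ne_top (hr : 0 < r) (hball : Metric.ball (-k) r ⊆ recCone A) (u : Y) :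
    phiF (recCone A) k u ≠ ⊤ :=
  (lt_of_le_of_lt (phiC_le_div hr hball u) (EReal.coe_lt_top _)).ne

lemma phiA_exists_mem (hAne : A.Nonempty) (hr : 0 < r)
    (hball : Metric.ball (-k) r ⊆ recCone A) (y : Y) : ∃ t : ℝ, y - t • k ∈ A := by
  obtain ⟨a, ha⟩ := hAne
  set t : ℝ := ‖y - a‖ / r + 1 with htdef
  have h1 : (y - a) - t • k ∈ recCone A := mem_recCone_of_big hr hball (y - a) one_pos
  refine ⟨t, ?_⟩
  have h2 := add_mem_of_recCone ha h1
  have heq : a + ((y - a) - t • k) = y - t • k := by module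
  rwa [heq] at h2

lemma phiA_ne_top (hAne : A.Nonempty) (hr : 0 < r)
    (hball : Metric.ball (-k) r ⊆ recCone A) (y : Y) : phiF A k y ≠ ⊤ := by
  obtain ⟨t, ht⟩ := phiA_exists_mem hAne hr hball y
  exact (lt_of_le_of_lt (phiF_le_of_mem ht) (EReal.coe_lt_top _)).ne

lemma phiA_ne_bot (hrec : ∀ a ∈ A, ∀ t : ℝ, 0 ≤ t → a - t • k ∈ A)
    (hAp : A ≠ Set.univ) (hr : 0 < r)
    (hball : Metric.ball (-k) r ⊆ recCone A) (y : Y) : phiF A k y ≠ ⊥ := by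
  intro hbot
  apply hAp
  ext z
  simp only [Set.mem_univ, iff_true]
  set s : ℝ := ‖z - y‖ / r + 1 with hsdef
  have hsC : (z - y) - s • k ∈ recCone A := mem_recCone_of_big hr hball (z - y) one_pos
  obtain ⟨t, ht, hmem⟩ : ∃ t : ℝ, t < -s ∧ y - t • k ∈ A := by
    refine exists_lt_of_phiF_lt ?_
    rw [hbot]; exact EReal.bot_lt_coe _
  have hC2 : (z - y) + t • k ∈ recCone A := by
    have h3 := recCone_sub_k hrec _ hsC (-(t + s)) (by linarith)
    have heq : ((z - y) - s • k) - (-(t + s)) • k = (z - y) + t • k := by module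
    rwa [heq] at h3
  have h4 := add_mem_of_recCone hmem hC2
  have heq : (y - t • k) + ((z - y) + t • k) = z := by module
  rwa [heq] at h4

lemma lip_transfer {B : Set Y}
    (hBC : ∀ b ∈ B, ∀ u ∈ recCone A, b + u ∈ B) {L : ℝ}
    (hL : ∀ u : Y, phiF (recCone A) k u ≤ ((L * ‖u‖ : ℝ) : EReal)) {y₁ y₂ : Y}
    (h2t : phiF B k y₂ ≠ ⊤) (h2b : phiF B k y₂ ≠ ⊥) :
    phiF B k y₁ ≤ phiF B k y₂ + ((L * ‖y₁ - y₂‖ : ℝ) : EReal) := by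
  set p : ℝ := (phiF B k y₂).toReal with hp
  have hpe : phiF B k y₂ = (p : EReal) := (EReal.coe_toReal h2t h2b).symm
  rw [hpe, ← EReal.coe_add]
  apply le_coe_of_forall_eps
  intro ε hε
  obtain ⟨t₂, ht₂, hmem₂⟩ : ∃ t₂ : ℝ, t₂ < p + ε / 2 ∧ y₂ - t₂ • k ∈ B := by
    refine exists_lt_of_phiF_lt ?_
    rw [hpe]
    exact_mod_cast EReal.coe_lt_coe_iff.mpr (by linarith : p < p + ε / 2)
  obtain ⟨s, hs, hmems⟩ : ∃ s : ℝ, s < L * ‖y₁ - y₂‖ + ε / 2 ∧ (y₁ - y₂) - s • k ∈ recCone A :=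
    exists_lt_of_phiF_lt (lt_of_le_of_lt (hL (y₁ - y₂))
      (EReal.coe_lt_coe_iff.mpr (by linarith : L * ‖y₁ - y₂‖ < L * ‖y₁ - y₂‖ + ε / 2)))
  have hmem : y₁ - (t₂ + s) • k ∈ B := by
    have h5 := hBC _ hmem₂ _ hmems
    have heq : (y₂ - t₂ • k) + ((y₁ - y₂) - s • k) = y₁ - (t₂ + s) • k := by module
    rwa [heq] at h5
  exact le_trans (phiF_le_of_mem hmem) (EReal.coe_le_coe_iff.mpr (by linarith))

end main2

theorem stmt_18 {Y : Type*} [NormedAddCommGroup Y] [NormedSpace ℝ Y] [CompleteSpace Y]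
    (A : Set Y) (hAc : IsClosed A) (hAne : A.Nonempty) (hAp : A ≠ Set.univ)
    (k : Y) (hk : k ≠ 0) (hrec : ∀ a ∈ A, ∀ t : ℝ, 0 ≤ t → a - t • k ∈ A) :
    (((∀ y : Y, phiF A k y ≠ ⊤ ∧ phiF A k y ≠ ⊥) ∧
        ∃ L : ℝ, 0 ≤ L ∧ ∀ y₁ y₂ : Y,
          phiF A k y₁ ≤ phiF A k y₂ + ((L * ‖y₁ - y₂‖ : ℝ) : EReal)) ↔
      -k ∈ interior (recCone A)) ∧
    (((∀ y : Y, phiF (recCone A) k y ≠ ⊤ ∧ phiF (recCone A) k y ≠ ⊥) ∧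
        ∃ L : ℝ, 0 ≤ L ∧ ∀ y₁ y₂ : Y,
          phiF (recCone A) k y₁ ≤ phiF (recCone A) k y₂ + ((L * ‖y₁ - y₂‖ : ℝ) : EReal)) ↔
      -k ∈ interior (recCone A)) ∧
    (-k ∈ interior (recCone A) →
      ∀ L : ℝ, 0 ≤ L →
        (∀ y₁ y₂ : Y, phiF (recCone A) k y₁ ≤
            phiF (recCone A) k y₂ + ((L * ‖y₁ - y₂‖ : ℝ) : EReal)) →
        ∀ y₁ y₂ : Y, phiF A k y₁ ≤ phiF A k y₂ + ((L * ‖y₁ - y₂‖ : ℝ) : EReal)) := by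
  have hCsub : ∀ c ∈ recCone A, ∀ t : ℝ, 0 ≤ t → c - t • k ∈ recCone A := recCone_sub_k hrec
  have hint_ball : -k ∈ interior (recCone A) →
      ∃ r : ℝ, 0 < r ∧ Metric.ball (-k) r ⊆ recCone A := by
    intro h
    rcases Metric.mem_nhds_iff.mp (mem_interior_iff_mem_nhds.mp h) with ⟨r, hr, hball⟩
    exact ⟨r, hr, hball⟩
  refine ⟨⟨?_, ?_⟩, ⟨?_, ?_⟩, ?_⟩
  · rintro ⟨hfin, L, hL0, hLip⟩
    have hball := ball_subset_recCone hrec hL0 hLip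
    exact mem_interior.mpr ⟨_, hball, Metric.isOpen_ball,
      Metric.mem_ball_self (by positivity)⟩
  · intro hint
    obtain ⟨r, hr, hball⟩ := hint_ball hint
    refine ⟨fun y => ⟨phiA_ne_top hAne hr hball y, phiA_ne_bot hrec hAp hr hball y⟩,
      r⁻¹, by positivity, fun y₁ y₂ => ?_⟩
    have hL : ∀ u : Y, phiF (recCone A) k u ≤ ((r⁻¹ * ‖u‖ : ℝ) : EReal) := fun u => by
      have h := phiC_le_div hr hball u
      rwa [div_eq_inv_mul] at h
    exact lip_transfer (fun b hb u hu => add_mem_of_recCone hb hu) hL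
      (phiA_ne_top hAne hr hball y₂) (phiA_ne_bot hrec hAp hr hball y₂)
  · rintro ⟨hfin, L, hL0, hLip⟩
    have hball := ball_subset_recCone hCsub hL0 hLip
    have hsub : recCone (recCone A) ⊆ recCone A := fun u hu => by
      simpa using hu 0 (recCone_zero A) 1 zero_le_one
    exact mem_interior.mpr ⟨_, hball.trans hsub, Metric.isOpen_ball,
      Metric.mem_ball_self (by positivity)⟩
  · intro hint
    obtain ⟨r, hr, hball⟩ := hint_ball hint
    refine ⟨fun y => ⟨phiC_ne_top hr hball y, phiC_ne_bot hAc hAne hAp hr hball y⟩,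
      r⁻¹, by positivity, fun y₁ y₂ => ?_⟩
    have hL : ∀ u : Y, phiF (recCone A) k u ≤ ((r⁻¹ * ‖u‖ : ℝ) : EReal) := fun u => by
      have h := phiC_le_div hr hball u
      rwa [div_eq_inv_mul] at h
    exact lip_transfer (fun b hb u hu => recCone_add hb hu) hL
      (phiC_ne_top hr hball y₂) (phiC_ne_bot hAc hAne hAp hr hball y₂)
  · intro hint L hL0 hLip y₁ y₂
    obtain ⟨r, hr, hball⟩ := hint_ball hint
    have hC0 : phiF (recCone A) k 0 ≤ ((0 : ℝ) : EReal) :=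
      phiF_le_of_mem (by simpa using recCone_zero A)
    have hL' : ∀ u : Y, phiF (recCone A) k u ≤ ((L * ‖u‖ : ℝ) : EReal) := fun u => by
      have h1 := hLip u 0
      simp only [sub_zero] at h1
      refine le_trans h1 ?_
      calc phiF (recCone A) k 0 + ((L * ‖u‖ : ℝ) : EReal)
          ≤ ((0 : ℝ) : EReal) + ((L * ‖u‖ : ℝ) : EReal) := add_le_add hC0 le_rfl
        _ = ((L * ‖u‖ : ℝ) : EReal) := by rw [EReal.coe_zero, zero_add]
    exact lip_transfer (fun b hb u hu => add_mem_of_recCone hb hu) hL'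
      (phiA_ne_top hAne hr hball y₂) (phiA_ne_bot hrec hAp hr hball y₂)
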